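/- Let F be a field, A an invertible n×n matrix and B an invertible p×p matrix over F, and t = lcm(n,p). Then the t×t matrix A ⋉ B is invertible and (A ⋉ B)⁻¹ = B⁻¹ ⋉ A⁻¹; equivalently, (A ⋉ B)(B⁻¹ ⋉ A⁻¹) = I_t and (B⁻¹ ⋉ A⁻¹)(A ⋉ B) = I_t. -/
import Mathlib


open Matrix Kronecker

/-- The semi-tensor product (STP) of matrices: for `A : F^{m×n}` and `B : F^{p×q}`,
with `t = lcm n p`, `A ⋉ B := (A ⊗ I_{t/n}) * (B ⊗ I_{t/p})`, where the factors are
multiplied after the canonical identifications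
`Fin n × Fin (t/n) ≃ Fin t ≃ Fin p × Fin (t/p)` of index types. -/
def stp {F : Type*} [CommRing F] {m n p q : ℕ}
    (A : Matrix (Fin m) (Fin n) F) (B : Matrix (Fin p) (Fin q) F) :
    Matrix (Fin (m * (Nat.lcm n p / n))) (Fin (q * (Nat.lcm n p / p))) F :=
  (Matrix.reindex finProdFinEquiv
      (finProdFinEquiv.trans (finCongr (Nat.mul_div_cancel' (Nat.dvd_lcm_left n p))))
      (A ⊗ₖ (1 : Matrix (Fin (Nat.lcm n p / n)) (Fin (Nat.lcm n p / n)) F))) *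
  (Matrix.reindex
      (finProdFinEquiv.trans (finCongr (Nat.mul_div_cancel' (Nat.dvd_lcm_right n p))))
      finProdFinEquiv
      (B ⊗ₖ (1 : Matrix (Fin (Nat.lcm n p / p)) (Fin (Nat.lcm n p / p)) F)))

/-- For square matrices `A : F^{n×n}` and `B : F^{p×p}`, the STP `A ⋉ B` is a
`t × t` matrix, `t = lcm n p`, after the canonical reindexing of index types. -/
def stpSq {F : Type*} [CommRing F] {n p : ℕ}
    (A : Matrix (Fin n) (Fin n) F) (B : Matrix (Fin p) (Fin p) F) :
    Matrix (Fin (Nat.lcm n p)) (Fin (Nat.lcm n p)) F :=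
  Matrix.reindex (finCongr (Nat.mul_div_cancel' (Nat.dvd_lcm_left n p)))
    (finCongr (Nat.mul_div_cancel' (Nat.dvd_lcm_right n p))) (stp A B)


section Aux
variable {F : Type*} [CommRing F] {n p : ℕ}

private def eN (n p : ℕ) : Fin n × Fin (Nat.lcm n p / n) ≃ Fin (Nat.lcm n p) :=
  finProdFinEquiv.trans (finCongr (Nat.mul_div_cancel' (Nat.dvd_lcm_left n p)))

private def eP (n p : ℕ) : Fin p × Fin (Nat.lcm n p / p) ≃ Fin (Nat.lcm n p) :=
  finProdFinEquiv.trans (finCongr (Nat.mul_div_cancel' (Nat.dvd_lcm_right n p)))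

private def fN (A : Matrix (Fin n) (Fin n) F) : Matrix (Fin (Nat.lcm n p)) (Fin (Nat.lcm n p)) F :=
  Matrix.reindex (eN n p) (eN n p)
    (A ⊗ₖ (1 : Matrix (Fin (Nat.lcm n p / n)) (Fin (Nat.lcm n p / n)) F))

private def fP (B : Matrix (Fin p) (Fin p) F) : Matrix (Fin (Nat.lcm n p)) (Fin (Nat.lcm n p)) F :=
  Matrix.reindex (eP n p) (eP n p)
    (B ⊗ₖ (1 : Matrix (Fin (Nat.lcm n p / p)) (Fin (Nat.lcm n p / p)) F))

private lemma fN_mul (A A' : Matrix (Fin n) (Fin n) F) :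
    fN (p := p) A * fN A' = fN (A * A') := by
  simp only [fN, reindex_apply, submatrix_mul_equiv, ← Matrix.mul_kronecker_mul, Matrix.mul_one]

private lemma fP_mul (B B' : Matrix (Fin p) (Fin p) F) :
    fP (n := n) B * fP B' = fP (B * B') := by
  simp only [fP, reindex_apply, submatrix_mul_equiv, ← Matrix.mul_kronecker_mul, Matrix.mul_one]

private lemma fN_one : fN (p := p) (1 : Matrix (Fin n) (Fin n) F) = 1 := by
  simp [fN, Matrix.one_kronecker_one, reindex_apply, submatrix_one_equiv]

private lemma fP_one : fP (n := n) (1 : Matrix (Fin p) (Fin p) F) = 1 := by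
  simp [fP, Matrix.one_kronecker_one, reindex_apply, submatrix_one_equiv]

private lemma stpSq_eq (A : Matrix (Fin n) (Fin n) F) (B : Matrix (Fin p) (Fin p) F) :
    stpSq A B = fN A * fP B := by
  rfl

private lemma kron_one_apply_symm {k a b : ℕ} (h : a = b) (M : Matrix (Fin k) (Fin k) F)
    (i j : Fin (k * a)) (i' j' : Fin (k * b)) (hi : (i : ℕ) = i') (hj : (j : ℕ) = j') :
    (M ⊗ₖ (1 : Matrix (Fin a) (Fin a) F)) (finProdFinEquiv.symm i) (finProdFinEquiv.symm j)
      = (M ⊗ₖ (1 : Matrix (Fin b) (Fin b) F)) (finProdFinEquiv.symm i') (finProdFinEquiv.symm j') := by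
  subst h
  obtain rfl : i = i' := Fin.ext hi
  obtain rfl : j = j' := Fin.ext hj
  rfl

private lemma stpSq_comm_eq (A : Matrix (Fin n) (Fin n) F) (B : Matrix (Fin p) (Fin p) F) :
    Matrix.reindex (finCongr (Nat.lcm_comm p n)) (finCongr (Nat.lcm_comm p n)) (stpSq B A)
      = fP B * fN A := by
  have h := stpSq_eq B A
  ext i j
  rw [reindex_apply, submatrix_apply, h, Matrix.mul_apply, Matrix.mul_apply]
  rw [Fintype.sum_equiv (finCongr (Nat.lcm_comm p n)).symm]
  intro k
  simp only [fN, fP, eN, eP, reindex_apply, submatrix_apply, Equiv.symm_trans_apply,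
    finCongr_symm, finCongr_apply]
  congr 1 <;>
    exact kron_one_apply_symm (by rw [Nat.lcm_comm]) _ _ _ _ _ rfl rfl

end Aux

/-- If `A` and `B` are invertible square matrices, then `A ⋉ B` is an invertible
`t × t` matrix (`t = lcm n p`) and `(A ⋉ B)⁻¹ = B⁻¹ ⋉ A⁻¹`; equivalently,
`(A ⋉ B) * (B⁻¹ ⋉ A⁻¹) = I_t` and `(B⁻¹ ⋉ A⁻¹) * (A ⋉ B) = I_t`
(the product `B⁻¹ ⋉ A⁻¹`, a `lcm p n × lcm p n` matrix, being identified with a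
`t × t` matrix via the canonical reindexing). -/
theorem stp_inv {F : Type*} [Field F] {n p : ℕ}
    (A : Matrix (Fin n) (Fin n) F) (B : Matrix (Fin p) (Fin p) F)
    (hA : IsUnit A.det) (hB : IsUnit B.det) :
    IsUnit (stpSq A B).det ∧
    (stpSq A B)⁻¹
      = Matrix.reindex (finCongr (Nat.lcm_comm p n)) (finCongr (Nat.lcm_comm p n))
          (stpSq B⁻¹ A⁻¹) ∧
    stpSq A B *
        Matrix.reindex (finCongr (Nat.lcm_comm p n)) (finCongr (Nat.lcm_comm p n))
          (stpSq B⁻¹ A⁻¹) = 1 ∧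
    Matrix.reindex (finCongr (Nat.lcm_comm p n)) (finCongr (Nat.lcm_comm p n))
          (stpSq B⁻¹ A⁻¹) * stpSq A B = 1 := by
  have hA1 : A * A⁻¹ = 1 := mul_nonsing_inv A hA
  have hA1' : A⁻¹ * A = 1 := nonsing_inv_mul A hA
  have hB1 : B * B⁻¹ = 1 := mul_nonsing_inv B hB
  have hB1' : B⁻¹ * B = 1 := nonsing_inv_mul B hB
  have key1 : stpSq A B *
      Matrix.reindex (finCongr (Nat.lcm_comm p n)) (finCongr (Nat.lcm_comm p n))
        (stpSq B⁻¹ A⁻¹) = 1 := by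
    rw [stpSq_eq, stpSq_comm_eq, mul_assoc, ← mul_assoc (fP B), fP_mul, hB1, fP_one, one_mul,
      fN_mul, hA1, fN_one]
  have key2 : Matrix.reindex (finCongr (Nat.lcm_comm p n)) (finCongr (Nat.lcm_comm p n))
        (stpSq B⁻¹ A⁻¹) * stpSq A B = 1 := by
    rw [stpSq_comm_eq, stpSq_eq, mul_assoc, ← mul_assoc (fN A⁻¹), fN_mul, hA1', fN_one, one_mul,
      fP_mul, hB1', fP_one]
  exact ⟨isUnit_det_of_right_inverse key1, inv_eq_right_inv key1, key1, key2⟩
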